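/- Let k be a field, R = k[x₁,…,xₙ], I a monomial ideal with dim_k(R/I) < ∞, M = R/I, and N a submodule of M. Then N is a reduced R-module if and only if N is a semisimple R-module. -/

import Mathlib

open MvPolynomial

/-- `I` is a monomial ideal of `k[x₁,…,xₙ]`. -/
def IsMonomialIdeal {k : Type*} [Field k] {n : ℕ}
    (I : Ideal (MvPolynomial (Fin n) k)) : Prop :=
  ∃ S : Set (Fin n →₀ ℕ), I = Ideal.span ((fun d => monomial d (1 : k)) '' S)

/-- In a monomial ideal, each monomial component of a member is a member. -/
lemma monomial_component_mem {k : Type*} [Field k] {n : ℕ}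
    {I : Ideal (MvPolynomial (Fin n) k)} (hI : IsMonomialIdeal I)
    {p : MvPolynomial (Fin n) k} (hp : p ∈ I) (d : Fin n →₀ ℕ) (hd : coeff d p ≠ 0) :
    (monomial d (1 : k) : MvPolynomial (Fin n) k) ∈ I := by
  obtain ⟨S, rfl⟩ := hI
  rw [mem_ideal_span_monomial_image] at hp ⊢
  intro xi hxi
  have hx : xi = d := by
    symm; simpa [support_monomial] using hxi
  subst hx
  exact hp _ (mem_support_iff.mpr hd)

/-- Each variable is nilpotent modulo a cofinite monomial ideal. -/
lemma exists_pow_X_mem {k : Type*} [Field k] {n : ℕ}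
    (I : Ideal (MvPolynomial (Fin n) k)) (hI : IsMonomialIdeal I)
    [FiniteDimensional k (MvPolynomial (Fin n) k ⧸ I)] (i : Fin n) :
    ∃ d : ℕ, (X i : MvPolynomial (Fin n) k) ^ d ∈ I := by
  have hint : Algebra.IsIntegral k (MvPolynomial (Fin n) k ⧸ I) :=
    Algebra.IsIntegral.of_finite _ _
  obtain ⟨p, hmonic, hp⟩ := hint.isIntegral (Ideal.Quotient.mk I (X i))
  have h1 : Polynomial.aeval ((X i : MvPolynomial (Fin n) k)) p ∈ I := by
    rw [← Ideal.Quotient.eq_zero_iff_mem]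
    rw [← Ideal.Quotient.mkₐ_eq_mk k, ← Polynomial.aeval_algHom_apply,
      Ideal.Quotient.mkₐ_eq_mk]
    exact hp
  set D := p.natDegree with hD
  refine ⟨D, ?_⟩
  have hco : coeff (Finsupp.single i D)
      (Polynomial.aeval ((X i : MvPolynomial (Fin n) k)) p) = 1 := by
    rw [Polynomial.aeval_eq_sum_range, coeff_sum]
    have key : ∀ j ∈ Finset.range (D + 1),
        coeff (Finsupp.single i D) (p.coeff j • (X i : MvPolynomial (Fin n) k) ^ j) =
          if j = D then p.coeff j else 0 := by
      intro j _
      rw [coeff_smul, X_pow_eq_monomial, coeff_monomial]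
      by_cases h : j = D
      · subst h; simp
      · have : Finsupp.single i j ≠ Finsupp.single i D :=
          fun hh => h (Finsupp.single_injective i hh)
        simp [h, this]
    rw [Finset.sum_congr rfl key, Finset.sum_ite_eq' (Finset.range (D + 1)) D]
    simp [hmonic.coeff_natDegree, Nat.lt_succ_self, hD]
  rw [X_pow_eq_monomial]
  exact monomial_component_mem hI h1 _ (by rw [hco]; exact one_ne_zero)

lemma smul_mk_eq {k : Type*} [Field k] {n : ℕ}
    (I : Ideal (MvPolynomial (Fin n) k)) (p q : MvPolynomial (Fin n) k) :
    p • (Ideal.Quotient.mk I q) = Ideal.Quotient.mk I (p * q) := by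
  rfl

lemma smul_eq_zero_of_mem' {k : Type*} [Field k] {n : ℕ}
    {I : Ideal (MvPolynomial (Fin n) k)} {p : MvPolynomial (Fin n) k} (hp : p ∈ I)
    (m : MvPolynomial (Fin n) k ⧸ I) : p • m = 0 := by
  obtain ⟨q, rfl⟩ := Ideal.Quotient.mk_surjective m
  rw [smul_mk_eq, Ideal.Quotient.eq_zero_iff_mem]
  exact I.mul_mem_right q hp

lemma smul_of_kills {k : Type*} [Field k] {n : ℕ}
    {I : Ideal (MvPolynomial (Fin n) k)} (m : MvPolynomial (Fin n) k ⧸ I)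
    (h : ∀ i, (X i : MvPolynomial (Fin n) k) • m = 0) (p : MvPolynomial (Fin n) k) :
    p • m = (C (constantCoeff p) : MvPolynomial (Fin n) k) • m := by
  induction p using MvPolynomial.induction_on with
  | C a => simp
  | add p q hp hq =>
      rw [add_smul, hp, hq, map_add, map_add, add_smul]
  | mul_X p i hp =>
      rw [mul_comm, mul_smul, hp, smul_comm, h i, smul_zero]
      simp

set_option maxHeartbeats 1000000 in
set_option synthInstance.maxHeartbeats 400000 in
/-- For `M = R/I` with `I` a monomial ideal and `dim_k R/I < ∞`, a submodule `N` of `M`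
is reduced if and only if it is semisimple. -/
theorem reduced_iff_semisimple {k : Type*} [Field k] [CharZero k] {n : ℕ}
    (I : Ideal (MvPolynomial (Fin n) k)) (hI : IsMonomialIdeal I)
    [FiniteDimensional k (MvPolynomial (Fin n) k ⧸ I)]
    (N : Submodule (MvPolynomial (Fin n) k) (MvPolynomial (Fin n) k ⧸ I)) :
    (∀ (a : MvPolynomial (Fin n) k), ∀ m ∈ N, a ^ 2 • m = 0 → a • m = 0) ↔
      IsSemisimpleModule (MvPolynomial (Fin n) k) N := by
  constructor
  · intro hred
    have kills : ∀ i : Fin n, ∀ m ∈ N, (X i : MvPolynomial (Fin n) k) • m = 0 := by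
      intro i m hm
      obtain ⟨d, hdI⟩ := exists_pow_X_mem I hI i
      have hstep : ∀ t : ℕ, (X i : MvPolynomial (Fin n) k) ^ (2 ^ t) • m = 0 →
          (X i : MvPolynomial (Fin n) k) • m = 0 := by
        intro t
        induction t with
        | zero => intro h; simpa only [pow_zero, pow_one] using h
        | succ t ih =>
          intro h
          refine ih (hred ((X i : MvPolynomial (Fin n) k) ^ (2 ^ t)) m hm ?_)
          rw [← pow_mul, ← pow_succ]
          exact h
      apply hstep d
      have hle : d ≤ 2 ^ d := Nat.le_of_lt (Nat.lt_two_pow_self)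
      rw [← Nat.sub_add_cancel hle, pow_add, mul_smul, smul_eq_zero_of_mem' hdI, smul_zero]
    have hsm : ∀ (p : MvPolynomial (Fin n) k) (x : ↥N),
        p • x = constantCoeff p • x := by
      intro p x
      apply Subtype.ext
      have hx : ∀ i, (X i : MvPolynomial (Fin n) k) • (x : MvPolynomial (Fin n) k ⧸ I) = 0 :=
        fun i => kills i x x.2
      have h1 : ((p • x : ↥N) : MvPolynomial (Fin n) k ⧸ I)
          = p • (x : MvPolynomial (Fin n) k ⧸ I) := rfl
      have h2 : ((constantCoeff p • x : ↥N) : MvPolynomial (Fin n) k ⧸ I)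
          = constantCoeff p • (x : MvPolynomial (Fin n) k ⧸ I) := rfl
      rw [h1, h2, smul_of_kills _ hx p, ← MvPolynomial.algebraMap_eq,
        algebraMap_smul]
    rw [isSemisimpleModule_iff]; constructor
    intro P
    obtain ⟨Q, hQ⟩ := Submodule.exists_isCompl (Submodule.restrictScalars k P)
    refine ⟨{ toAddSubmonoid := Q.toAddSubmonoid,
              smul_mem' := by
                intro p x hx
                have hpx : p • x = constantCoeff p • x := hsm p x
                show p • x ∈ Q
                rw [hpx]
                exact Q.smul_mem _ hx }, ?_, ?_⟩
    · rw [Submodule.disjoint_def]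
      intro x hxP hxQ
      exact Submodule.disjoint_def.mp hQ.disjoint x hxP hxQ
    · rw [codisjoint_iff, eq_top_iff]
      intro x _
      have hx : x ∈ (Submodule.restrictScalars k P) ⊔ Q := by
        rw [codisjoint_iff.mp hQ.codisjoint]; trivial
      obtain ⟨y, hy, z, hz, rfl⟩ := Submodule.mem_sup.mp hx
      exact Submodule.add_mem_sup hy hz
  · intro hss
    have kills : ∀ i : Fin n, ∀ m ∈ N, (X i : MvPolynomial (Fin n) k) • m = 0 := by
      intro i m hm
      obtain ⟨d, hdI⟩ := exists_pow_X_mem I hI i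
      have rad : (Module.annihilator (MvPolynomial (Fin n) k) ↥N).IsRadical :=
        IsSemisimpleModule.annihilator_isRadical (MvPolynomial (Fin n) k) (M := ↥N)
      have h1 : (X i : MvPolynomial (Fin n) k) ^ d ∈
          Module.annihilator (MvPolynomial (Fin n) k) ↥N := by
        rw [Module.mem_annihilator]
        intro x
        apply Subtype.ext
        exact smul_eq_zero_of_mem' hdI (x : MvPolynomial (Fin n) k ⧸ I)
      have h2 : (X i : MvPolynomial (Fin n) k) ∈
          Module.annihilator (MvPolynomial (Fin n) k) ↥N := rad ⟨d, h1⟩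
      have h3 := Module.mem_annihilator.mp h2 ⟨m, hm⟩
      simpa using Subtype.ext_iff.mp h3
    intro a m hm h2
    have hk : ∀ i, (X i : MvPolynomial (Fin n) k) • m = 0 := fun i => kills i m hm
    have ha : a • m = (C (constantCoeff a) : MvPolynomial (Fin n) k) • m :=
      smul_of_kills m hk a
    set c := constantCoeff a with hc
    by_cases hc0 : c = 0
    · rw [ha, hc0, map_zero, zero_smul]
    · have hmm : a ^ 2 • m = (C (c ^ 2) : MvPolynomial (Fin n) k) • m := by
        rw [pow_two, mul_smul, ha, smul_comm a (C c : MvPolynomial (Fin n) k) m, ha,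
          ← mul_smul, ← map_mul, ← pow_two]
      have hz : (C (c ^ 2) : MvPolynomial (Fin n) k) • m = 0 := by rw [← hmm]; exact h2
      rw [ha]
      have hcc : c = c⁻¹ * c ^ 2 := by
        rw [pow_two, ← mul_assoc, inv_mul_cancel₀ hc0, one_mul]
      rw [hcc, map_mul, mul_smul, hz, smul_zero]
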